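/- Let P ∈ ℝ² and let u, v ∈ ℝ² satisfy ‖u‖ = ‖v‖ = 2√3 and ⟨u,v⟩ = 6. Set Λ = {a·u + b·v : a, b ∈ ℤ} and w = (u+v)/3. Then both of the following sets are balanced configurations: (i) the vertices and edge midpoints of the regular hexagon tiling with side 2, namely C₁ = (P + Λ) ∪ (P + w + Λ) ∪ (P + w/2 + Λ) ∪ (P + (w−u)/2 + Λ) ∪ (P + (w−v)/2 + Λ); and (ii) the vertices, edge midpoints, and face centers of the same tiling, namely C₂ = C₁ ∪ (P + 2w + Λ). That is, for every point x in the set and every d > 0, the set of points of the configuration at distance d from x is finite and the vectors from x to these points sum to zero. -/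

import Mathlib

open EuclideanGeometry RealInnerProductSpace

noncomputable section

/-- The Euclidean plane. -/
abbrev E2 := EuclideanSpace ℝ (Fin 2)

/-- A configuration `C ⊆ ℝ²` is balanced if for every `P ∈ C` and every `d > 0` the set of
points of `C` at distance `d` from `P` is finite and the vectors from `P` to these points
sum to zero. -/
def IsBalanced (C : Set E2) : Prop :=
  ∀ P ∈ C, ∀ d : ℝ, 0 < d →
    {x ∈ C | dist x P = d}.Finite ∧ ∑ᶠ x ∈ {x ∈ C | dist x P = d}, (x - P) = 0

/-- `C` has minimal distance 1: distinct points are at distance at least 1, and some pair of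
points is at distance exactly 1. -/
def MinDistOne (C : Set E2) : Prop :=
  (∀ x ∈ C, ∀ y ∈ C, x ≠ y → 1 ≤ dist x y) ∧ ∃ x ∈ C, ∃ y ∈ C, dist x y = 1

/-- The set of neighbors (points of `C` at distance exactly 1) of `P`. -/
def nbrs (C : Set E2) (P : E2) : Set E2 := {x ∈ C | dist x P = 1}

/-- The coset `P + ℤu + ℤv` of the lattice generated by `u` and `v`. -/
def latticePts (P u v : E2) : Set E2 :=
  {x | ∃ a b : ℤ, x = P + (a : ℝ) • u + (b : ℝ) • v}

/-- The vertices and edge midpoints of the regular hexagon tiling with side 2 determined by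
`u, v` with `‖u‖ = ‖v‖ = 2√3` and `⟪u,v⟫ = 6`: with `Λ = ℤu + ℤv` and `w = (u+v)/3`, this is
`(P + Λ) ∪ (P + w + Λ) ∪ (P + w/2 + Λ) ∪ (P + (w-u)/2 + Λ) ∪ (P + (w-v)/2 + Λ)`. -/
def hexVertsAndMids (P u v : E2) : Set E2 :=
  latticePts P u v ∪ latticePts (P + (3⁻¹ : ℝ) • (u + v)) u v ∪
    latticePts (P + (6⁻¹ : ℝ) • (u + v)) u v ∪
    latticePts (P + (6⁻¹ : ℝ) • (u + v) - (2⁻¹ : ℝ) • u) u v ∪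
    latticePts (P + (6⁻¹ : ℝ) • (u + v) - (2⁻¹ : ℝ) • v) u v

/-- The vertices, edge midpoints and face centers of the same hexagon tiling:
`hexVertsAndMids P u v` together with the coset `P + 2w + Λ` where `w = (u+v)/3`. -/
def hexVertsMidsCenters (P u v : E2) : Set E2 :=
  hexVertsAndMids P u v ∪ latticePts (P + (2 / 3 : ℝ) • (u + v)) u v

/-! ### Auxiliary machinery -/

/-- Points with coordinates `p/6` in the basis `u, v`, translated by `P`. -/
def scoordAux (P u v : E2) (p : ℤ × ℤ) : E2 :=
  P + ((p.1 : ℝ) / 6) • u + ((p.2 : ℝ) / 6) • v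

/-- Coordinate action of the rotation by 120° about `q`. -/
def rotc (q p : ℤ × ℤ) : ℤ × ℤ := (2 * q.1 + q.2 - p.1 - p.2, q.2 + p.1 - q.1)

/-- Coordinate action of the point reflection about `q`. -/
def refc (q p : ℤ × ℤ) : ℤ × ℤ := (2 * q.1 - p.1, 2 * q.2 - p.2)

def cond1 (p : ℤ × ℤ) : Prop :=
  (p.1 % 6 = 0 ∧ p.2 % 6 = 0) ∨ (p.1 % 6 = 2 ∧ p.2 % 6 = 2) ∨
  (p.1 % 6 = 1 ∧ p.2 % 6 = 1) ∨ (p.1 % 6 = 4 ∧ p.2 % 6 = 1) ∨ (p.1 % 6 = 1 ∧ p.2 % 6 = 4)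

def cond2 (p : ℤ × ℤ) : Prop := cond1 p ∨ (p.1 % 6 = 4 ∧ p.2 % 6 = 4)

lemma rotc_rotc_rotc (q p : ℤ × ℤ) : rotc q (rotc q (rotc q p)) = p := by
  simp only [rotc, Prod.ext_iff]; constructor <;> ring

lemma refc_refc (q p : ℤ × ℤ) : refc q (refc q p) = p := by
  simp only [refc, Prod.ext_iff]; constructor <;> ring

set_option maxHeartbeats 1600000 in
lemma cond1_sym (q : ℤ × ℤ) (hq : cond1 q) :
    (∀ p, cond1 p → cond1 (rotc q p)) ∨ (∀ p, cond1 p → cond1 (refc q p)) := by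
  rcases hq with ⟨h1,h2⟩ | ⟨h1,h2⟩ | ⟨h1,h2⟩ | ⟨h1,h2⟩ | ⟨h1,h2⟩
  · left; intro p hp; simp only [cond1, rotc] at hp ⊢
    rcases hp with ⟨a,b⟩|⟨a,b⟩|⟨a,b⟩|⟨a,b⟩|⟨a,b⟩ <;> omega
  · left; intro p hp; simp only [cond1, rotc] at hp ⊢
    rcases hp with ⟨a,b⟩|⟨a,b⟩|⟨a,b⟩|⟨a,b⟩|⟨a,b⟩ <;> omega
  · right; intro p hp; simp only [cond1, refc] at hp ⊢
    rcases hp with ⟨a,b⟩|⟨a,b⟩|⟨a,b⟩|⟨a,b⟩|⟨a,b⟩ <;> omega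
  · right; intro p hp; simp only [cond1, refc] at hp ⊢
    rcases hp with ⟨a,b⟩|⟨a,b⟩|⟨a,b⟩|⟨a,b⟩|⟨a,b⟩ <;> omega
  · right; intro p hp; simp only [cond1, refc] at hp ⊢
    rcases hp with ⟨a,b⟩|⟨a,b⟩|⟨a,b⟩|⟨a,b⟩|⟨a,b⟩ <;> omega

set_option maxHeartbeats 1600000 in
lemma cond2_sym (q : ℤ × ℤ) (hq : cond2 q) :
    (∀ p, cond2 p → cond2 (rotc q p)) ∨ (∀ p, cond2 p → cond2 (refc q p)) := by
  rcases hq with (⟨h1,h2⟩ | ⟨h1,h2⟩ | ⟨h1,h2⟩ | ⟨h1,h2⟩ | ⟨h1,h2⟩) | ⟨h1,h2⟩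
  · left; intro p hp; simp only [cond2, cond1, rotc] at hp ⊢
    rcases hp with (⟨a,b⟩|⟨a,b⟩|⟨a,b⟩|⟨a,b⟩|⟨a,b⟩)|⟨a,b⟩ <;> omega
  · left; intro p hp; simp only [cond2, cond1, rotc] at hp ⊢
    rcases hp with (⟨a,b⟩|⟨a,b⟩|⟨a,b⟩|⟨a,b⟩|⟨a,b⟩)|⟨a,b⟩ <;> omega
  · right; intro p hp; simp only [cond2, cond1, refc] at hp ⊢
    rcases hp with (⟨a,b⟩|⟨a,b⟩|⟨a,b⟩|⟨a,b⟩|⟨a,b⟩)|⟨a,b⟩ <;> omega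
  · right; intro p hp; simp only [cond2, cond1, refc] at hp ⊢
    rcases hp with (⟨a,b⟩|⟨a,b⟩|⟨a,b⟩|⟨a,b⟩|⟨a,b⟩)|⟨a,b⟩ <;> omega
  · right; intro p hp; simp only [cond2, cond1, refc] at hp ⊢
    rcases hp with (⟨a,b⟩|⟨a,b⟩|⟨a,b⟩|⟨a,b⟩|⟨a,b⟩)|⟨a,b⟩ <;> omega
  · left; intro p hp; simp only [cond2, cond1, rotc] at hp ⊢
    rcases hp with (⟨a,b⟩|⟨a,b⟩|⟨a,b⟩|⟨a,b⟩|⟨a,b⟩)|⟨a,b⟩ <;> omega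

lemma scoord_sub (P u v : E2) (p q : ℤ × ℤ) :
    scoordAux P u v p - scoordAux P u v q =
      (((p.1 - q.1 : ℤ) : ℝ)/6) • u + (((p.2 - q.2 : ℤ) : ℝ)/6) • v := by
  simp only [scoordAux]; push_cast; module

lemma rot_scoord (P u v : E2) (R : E2 →ₗ[ℝ] E2) (hRu : R u = v - u) (hRv : R v = -u)
    (q p : ℤ × ℤ) :
    scoordAux P u v q + R (scoordAux P u v p - scoordAux P u v q) =
      scoordAux P u v (rotc q p) := by
  rw [scoord_sub, map_add, map_smul, map_smul, hRu, hRv]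
  simp only [scoordAux, rotc]; push_cast; module

lemma ref_scoord (P u v : E2) (q p : ℤ × ℤ) :
    scoordAux P u v q - (scoordAux P u v p - scoordAux P u v q) =
      scoordAux P u v (refc q p) := by
  simp only [scoordAux, refc]; push_cast; module

lemma hexVertsAndMids_eq (P u v : E2) :
    hexVertsAndMids P u v = {x | ∃ p, cond1 p ∧ x = scoordAux P u v p} := by
  ext x
  simp only [hexVertsAndMids, Set.mem_union, latticePts, Set.mem_setOf_eq]
  constructor
  · rintro ((((⟨a,b,rfl⟩|⟨a,b,rfl⟩)|⟨a,b,rfl⟩)|⟨a,b,rfl⟩)|⟨a,b,rfl⟩)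
    · refine ⟨(6*a, 6*b), Or.inl ⟨by omega, by omega⟩, ?_⟩
      simp only [scoordAux]; push_cast; module
    · refine ⟨(6*a+2, 6*b+2), Or.inr (Or.inl ⟨by omega, by omega⟩), ?_⟩
      simp only [scoordAux]; push_cast; module
    · refine ⟨(6*a+1, 6*b+1), Or.inr (Or.inr (Or.inl ⟨by omega, by omega⟩)), ?_⟩
      simp only [scoordAux]; push_cast; module
    · refine ⟨(6*a-2, 6*b+1), Or.inr (Or.inr (Or.inr (Or.inl ⟨by omega, by omega⟩))), ?_⟩
      simp only [scoordAux]; push_cast; module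
    · refine ⟨(6*a+1, 6*b-2), Or.inr (Or.inr (Or.inr (Or.inr ⟨by omega, by omega⟩))), ?_⟩
      simp only [scoordAux]; push_cast; module
  · rintro ⟨⟨m,n⟩, hc, rfl⟩
    rcases hc with ⟨h1,h2⟩|⟨h1,h2⟩|⟨h1,h2⟩|⟨h1,h2⟩|⟨h1,h2⟩
    · obtain ⟨a, rfl⟩ : ∃ a:ℤ, m = 6*a := ⟨m/6, by omega⟩
      obtain ⟨b, rfl⟩ : ∃ b:ℤ, n = 6*b := ⟨n/6, by omega⟩
      refine Or.inl (Or.inl (Or.inl (Or.inl ⟨a, b, ?_⟩)))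
      simp only [scoordAux]; push_cast; module
    · obtain ⟨a, rfl⟩ : ∃ a:ℤ, m = 6*a+2 := ⟨(m-2)/6, by omega⟩
      obtain ⟨b, rfl⟩ : ∃ b:ℤ, n = 6*b+2 := ⟨(n-2)/6, by omega⟩
      refine Or.inl (Or.inl (Or.inl (Or.inr ⟨a, b, ?_⟩)))
      simp only [scoordAux]; push_cast; module
    · obtain ⟨a, rfl⟩ : ∃ a:ℤ, m = 6*a+1 := ⟨(m-1)/6, by omega⟩
      obtain ⟨b, rfl⟩ : ∃ b:ℤ, n = 6*b+1 := ⟨(n-1)/6, by omega⟩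
      refine Or.inl (Or.inl (Or.inr ⟨a, b, ?_⟩))
      simp only [scoordAux]; push_cast; module
    · obtain ⟨a, rfl⟩ : ∃ a:ℤ, m = 6*a-2 := ⟨(m+2)/6, by omega⟩
      obtain ⟨b, rfl⟩ : ∃ b:ℤ, n = 6*b+1 := ⟨(n-1)/6, by omega⟩
      refine Or.inl (Or.inr ⟨a, b, ?_⟩)
      simp only [scoordAux]; push_cast; module
    · obtain ⟨a, rfl⟩ : ∃ a:ℤ, m = 6*a+1 := ⟨(m-1)/6, by omega⟩
      obtain ⟨b, rfl⟩ : ∃ b:ℤ, n = 6*b-2 := ⟨(n+2)/6, by omega⟩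
      refine Or.inr ⟨a, b, ?_⟩
      simp only [scoordAux]; push_cast; module

lemma hexVertsMidsCenters_eq (P u v : E2) :
    hexVertsMidsCenters P u v = {x | ∃ p, cond2 p ∧ x = scoordAux P u v p} := by
  ext x
  simp only [hexVertsMidsCenters, Set.mem_union, hexVertsAndMids_eq, latticePts,
    Set.mem_setOf_eq, cond2]
  constructor
  · rintro (⟨p, hc, rfl⟩|⟨a,b,rfl⟩)
    · exact ⟨p, Or.inl hc, rfl⟩
    · refine ⟨(6*a+4, 6*b+4), Or.inr ⟨by omega, by omega⟩, ?_⟩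
      simp only [scoordAux]; push_cast; module
  · rintro ⟨⟨m,n⟩, hc|⟨h1,h2⟩, rfl⟩
    · exact Or.inl ⟨_, hc, rfl⟩
    · obtain ⟨a, rfl⟩ : ∃ a:ℤ, m = 6*a+4 := ⟨(m-4)/6, by omega⟩
      obtain ⟨b, rfl⟩ : ∃ b:ℤ, n = 6*b+4 := ⟨(n-4)/6, by omega⟩
      refine Or.inr ⟨a, b, ?_⟩
      simp only [scoordAux]; push_cast; module

lemma nsq_aux {u v : E2} (huu : ⟪u, u⟫ = 12) (hvv : ⟪v, v⟫ = 12) (huv : ⟪u, v⟫ = 6)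
    (a b : ℝ) : ‖a • u + b • v‖ ^ 2 = 12 * (a ^ 2 + a * b + b ^ 2) := by
  rw [← real_inner_self_eq_norm_sq]
  have hvu : ⟪v, u⟫ = 6 := by rw [real_inner_comm]; exact huv
  simp only [inner_add_left, inner_add_right, real_inner_smul_left, real_inner_smul_right,
    huu, hvv, huv, hvu]
  ring

lemma exists_rot {u v : E2} (hu : ‖u‖ = 2 * Real.sqrt 3) (hv : ‖v‖ = 2 * Real.sqrt 3)
    (huv : ⟪u, v⟫ = 6) :
    ∃ R : E2 →ₗ[ℝ] E2, R u = v - u ∧ R v = -u ∧ (∀ z, ‖R z‖ = ‖z‖) ∧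
      (∀ z, R z = z → z = 0) ∧ (∀ z, R (R (R z)) = z) := by
  have h12 : ((2 : ℝ) * Real.sqrt 3) ^ 2 = 12 := by
    rw [mul_pow, Real.sq_sqrt] <;> norm_num
  have huu : ⟪u, u⟫ = 12 := by rw [real_inner_self_eq_norm_sq, hu, h12]
  have hvv : ⟪v, v⟫ = 12 := by rw [real_inner_self_eq_norm_sq, hv, h12]
  have hnsq := nsq_aux huu hvv huv
  have hind : ∀ a b : ℝ, a • u + b • v = 0 → a = 0 ∧ b = 0 := by
    intro a b hab
    have h0 : 12 * (a ^ 2 + a * b + b ^ 2) = 0 := by rw [← hnsq, hab]; simp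
    constructor
    · have : a ^ 2 = 0 := le_antisymm (by nlinarith [sq_nonneg (a + b), sq_nonneg b]) (sq_nonneg a)
      exact pow_eq_zero_iff (by norm_num) |>.mp this
    · have : b ^ 2 = 0 := le_antisymm (by nlinarith [sq_nonneg (a + b), sq_nonneg a]) (sq_nonneg b)
      exact pow_eq_zero_iff (by norm_num) |>.mp this
  have hli : LinearIndependent ℝ ![u, v] := LinearIndependent.pair_iff.mpr hind
  have hcard : Fintype.card (Fin 2) = Module.finrank ℝ E2 := by
    simp [finrank_euclideanSpace]
  let B := basisOfLinearIndependentOfCardEqFinrank hli hcard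
  have hB : ⇑B = ![u, v] := coe_basisOfLinearIndependentOfCardEqFinrank hli hcard
  have hspan : ∀ x : E2, ∃ a b : ℝ, x = a • u + b • v := by
    intro x
    have hx : x ∈ Submodule.span ℝ ({u, v} : Set E2) := by
      have hsp := B.span_eq
      rw [hB] at hsp
      have hr : Set.range ![u, v] = {u, v} := by
        ext y; simp [Fin.exists_fin_two]; tauto
      rw [hr] at hsp
      rw [hsp]; trivial
    obtain ⟨a, b, hab⟩ := Submodule.mem_span_pair.mp hx
    exact ⟨a, b, hab.symm⟩
  set R : E2 →ₗ[ℝ] E2 := B.constr (M' := E2) ℝ ![v - u, -u] with hRdef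
  have hB0 : B 0 = u := by rw [hB]; rfl
  have hB1 : B 1 = v := by rw [hB]; rfl
  have hRu : R u = v - u := by
    have h := B.constr_basis ℝ ![v - u, -u] 0
    rw [hB0] at h
    exact h
  have hRv : R v = -u := by
    have h := B.constr_basis ℝ ![v - u, -u] 1
    rw [hB1] at h
    exact h
  have hRz : ∀ a b : ℝ, R (a • u + b • v) = (-a-b) • u + a • v := by
    intro a b
    rw [map_add, map_smul, map_smul, hRu, hRv]
    module
  have hnorm : ∀ z, ‖R z‖ = ‖z‖ := by
    intro z
    obtain ⟨a, b, rfl⟩ := hspan z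
    rw [hRz]
    have h1 : ‖(-a-b) • u + a • v‖ ^ 2 = ‖a • u + b • v‖ ^ 2 := by rw [hnsq, hnsq]; ring
    calc ‖(-a-b) • u + a • v‖ = Real.sqrt (‖(-a-b) • u + a • v‖^2) :=
          (Real.sqrt_sq (norm_nonneg _)).symm
      _ = Real.sqrt (‖a • u + b • v‖^2) := by rw [h1]
      _ = ‖a • u + b • v‖ := Real.sqrt_sq (norm_nonneg _)
  have hfix : ∀ z, R z = z → z = 0 := by
    intro z hz
    obtain ⟨a, b, rfl⟩ := hspan z
    rw [hRz] at hz
    have h0 : ((-a-b)-a) • u + (a-b) • v = 0 := by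
      have h' := sub_eq_zero.mpr hz
      rw [← h']; module
    obtain ⟨h1, h2⟩ := hind _ _ h0
    have ha : a = 0 := by linarith
    have hb : b = 0 := by linarith
    rw [ha, hb]; simp
  have hR3 : ∀ z, R (R (R z)) = z := by
    intro z; obtain ⟨a, b, rfl⟩ := hspan z
    simp only [hRz]
    match_scalars <;> ring
  exact ⟨R, hRu, hRv, hnorm, hfix, hR3⟩

lemma sphere_finite (P u v : E2)
    (hnsq : ∀ a b : ℝ, ‖a • u + b • v‖ ^ 2 = 12 * (a ^ 2 + a * b + b ^ 2))
    (P₀ : E2) (d : ℝ) : {x ∈ Set.range (scoordAux P u v) | dist x P₀ = d}.Finite := by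
  set M : ℝ := |d| + ‖P₀ - P‖ with hM
  have hM0 : (0:ℝ) ≤ M := by positivity
  set K : ℤ := ⌈6 * M^2⌉ with hK
  apply Set.Finite.subset
    ((Set.finite_Icc ((-K,-K) : ℤ×ℤ) ((K,K) : ℤ×ℤ)).image (scoordAux P u v))
  rintro x ⟨⟨p, rfl⟩, hd⟩
  refine ⟨p, ?_, rfl⟩
  have hz : scoordAux P u v p - P = ((p.1:ℝ)/6) • u + ((p.2:ℝ)/6) • v := by
    simp only [scoordAux]; module
  have hb : ‖((p.1:ℝ)/6) • u + ((p.2:ℝ)/6) • v‖ ≤ M := by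
    rw [← hz]
    calc ‖scoordAux P u v p - P‖ = ‖(scoordAux P u v p - P₀) + (P₀ - P)‖ := by
          congr 1; abel
      _ ≤ ‖scoordAux P u v p - P₀‖ + ‖P₀ - P‖ := norm_add_le _ _
      _ ≤ M := by
          rw [← dist_eq_norm, hd, hM]
          exact add_le_add_left (le_abs_self d) _
  have hsq : ‖((p.1:ℝ)/6) • u + ((p.2:ℝ)/6) • v‖ ^ 2 ≤ M ^ 2 :=
    pow_le_pow_left₀ (norm_nonneg _) hb 2
  rw [hnsq] at hsq
  have hck : 6 * M ^ 2 ≤ (K:ℝ) := Int.le_ceil _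
  have h1 : ((p.1:ℝ))^2 ≤ (K:ℝ) := by nlinarith [sq_nonneg ((p.1:ℝ) + (p.2:ℝ)), sq_nonneg (p.2:ℝ)]
  have h2 : ((p.2:ℝ))^2 ≤ (K:ℝ) := by nlinarith [sq_nonneg ((p.1:ℝ) + (p.2:ℝ)), sq_nonneg (p.1:ℝ)]
  have h1' : p.1^2 ≤ K := by exact_mod_cast h1
  have h2' : p.2^2 ≤ K := by exact_mod_cast h2
  have hp1 : -K ≤ p.1 ∧ p.1 ≤ K := by
    constructor <;> nlinarith [sq_nonneg (p.1 - 1), sq_nonneg (p.1 + 1)]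
  have hp2 : -K ≤ p.2 ∧ p.2 ≤ K := by
    constructor <;> nlinarith [sq_nonneg (p.2 - 1), sq_nonneg (p.2 + 1)]
  rw [Set.mem_Icc]
  exact ⟨⟨hp1.1, hp2.1⟩, ⟨hp1.2, hp2.2⟩⟩

lemma sum_sphere_zero (C : Set E2) (P₀ : E2) (d : ℝ)
    (hfin : {x ∈ C | dist x P₀ = d}.Finite)
    (R : E2 →ₗ[ℝ] E2) (hnorm : ∀ z, ‖R z‖ = ‖z‖) (hfix : ∀ z, R z = z → z = 0)
    (hmapC : ∀ x ∈ C, P₀ + R (x - P₀) ∈ C)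
    (hsurjC : ∀ x ∈ C, ∃ y ∈ C, P₀ + R (y - P₀) = x) :
    ∑ᶠ x ∈ {x ∈ C | dist x P₀ = d}, (x - P₀) = 0 := by
  set T := hfin.toFinset with hT
  have hmem : ∀ x, x ∈ T ↔ x ∈ C ∧ dist x P₀ = d := by
    intro x; rw [hT, Set.Finite.mem_toFinset]; exact Iff.rfl
  have hdist : ∀ x : E2, dist (P₀ + R (x - P₀)) P₀ = dist x P₀ := by
    intro x; rw [dist_eq_norm, add_sub_cancel_left, hnorm, ← dist_eq_norm]
  have hmapT : ∀ x ∈ T, P₀ + R (x - P₀) ∈ T := by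
    intro x hx; rw [hmem] at hx ⊢
    exact ⟨hmapC x hx.1, by rw [hdist, hx.2]⟩
  have key : ∑ x ∈ T, R (x - P₀) = ∑ x ∈ T, (x - P₀) := by
    apply Finset.sum_bij (fun x _ => P₀ + R (x - P₀)) hmapT
    · intro a ha b hb h
      have h1 : R (a - P₀) = R (b - P₀) := add_left_cancel h
      have h2 : R (a - b) = 0 := by
        have h3 : R (a - P₀) - R (b - P₀) = 0 := sub_eq_zero.mpr h1
        rw [← map_sub] at h3
        have h4 : (a - P₀) - (b - P₀) = a - b := by abel
        rwa [h4] at h3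
      have h5 : ‖a - b‖ = 0 := by rw [← hnorm, h2, norm_zero]
      exact sub_eq_zero.mp (norm_eq_zero.mp h5)
    · intro y hy
      rw [hmem] at hy
      obtain ⟨x, hxC, hxy⟩ := hsurjC y hy.1
      refine ⟨x, ?_, hxy⟩
      rw [hmem]
      refine ⟨hxC, ?_⟩
      have h6 : dist (P₀ + R (x - P₀)) P₀ = d := by rw [hxy]; exact hy.2
      rw [← hdist x]; exact h6
    · intro a ha
      rw [add_sub_cancel_left]
  have hsum : R (∑ x ∈ T, (x - P₀)) = ∑ x ∈ T, (x - P₀) := by rw [map_sum]; exact key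
  have h0 : ∑ x ∈ T, (x - P₀) = 0 := hfix _ hsum
  rw [← hfin.coe_toFinset, finsum_mem_coe_finset]
  exact h0

lemma balanced_of_cond (P u v : E2)
    (hnsq : ∀ a b : ℝ, ‖a • u + b • v‖ ^ 2 = 12 * (a ^ 2 + a * b + b ^ 2))
    (R : E2 →ₗ[ℝ] E2) (hRu : R u = v - u) (hRv : R v = -u)
    (hnorm : ∀ z, ‖R z‖ = ‖z‖) (hfix : ∀ z, R z = z → z = 0) (hR3 : ∀ z, R (R (R z)) = z)
    (cond : ℤ × ℤ → Prop)
    (hsym : ∀ q, cond q → (∀ p, cond p → cond (rotc q p)) ∨ (∀ p, cond p → cond (refc q p)))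
    (C : Set E2) (hC : C = {x | ∃ p, cond p ∧ x = scoordAux P u v p}) :
    IsBalanced C := by
  intro P₀ hP₀ d hd
  have hfin : {x ∈ C | dist x P₀ = d}.Finite := by
    apply (sphere_finite P u v hnsq P₀ d).subset
    rintro x ⟨hxC, hxd⟩
    rw [hC] at hxC; obtain ⟨p, _, rfl⟩ := hxC
    exact ⟨⟨p, rfl⟩, hxd⟩
  refine ⟨hfin, ?_⟩
  obtain ⟨q, hq, hP₀eq⟩ : ∃ q, cond q ∧ P₀ = scoordAux P u v q := by
    rw [hC] at hP₀; exact hP₀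
  rcases hsym q hq with hrot | href
  · apply sum_sphere_zero C P₀ d hfin R hnorm hfix
    · intro x hx
      rw [hC] at hx ⊢
      obtain ⟨p, hp, rfl⟩ := hx
      exact ⟨rotc q p, hrot p hp, by rw [hP₀eq, rot_scoord P u v R hRu hRv]⟩
    · intro x hx
      rw [hC] at hx
      obtain ⟨p, hp, rfl⟩ := hx
      refine ⟨scoordAux P u v (rotc q (rotc q p)), ?_, ?_⟩
      · rw [hC]; exact ⟨_, hrot _ (hrot _ hp), rfl⟩
      · rw [hP₀eq, rot_scoord P u v R hRu hRv, rotc_rotc_rotc]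
  · set R' : E2 →ₗ[ℝ] E2 := -LinearMap.id with hR'
    have hR'app : ∀ z : E2, R' z = -z := fun z => rfl
    have hmap' : ∀ x ∈ C, P₀ + R' (x - P₀) ∈ C := by
      intro x hx
      rw [hC] at hx ⊢
      obtain ⟨p, hp, rfl⟩ := hx
      refine ⟨refc q p, href p hp, ?_⟩
      rw [hP₀eq, hR'app, ← sub_eq_add_neg, ref_scoord]
    apply sum_sphere_zero C P₀ d hfin R'
    · intro z; rw [hR'app, norm_neg]
    · intro z hz
      rw [hR'app] at hz
      have h2 : z + z = 0 := by nth_rewrite 1 [← hz]; exact neg_add_cancel z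
      have h3 : (2:ℝ) • z = 0 := by rw [two_smul]; exact h2
      rcases smul_eq_zero.mp h3 with h | h
      · norm_num at h
      · exact h
    · exact hmap'
    · intro x hx
      rw [hC] at hx
      obtain ⟨p, hp, rfl⟩ := hx
      refine ⟨scoordAux P u v (refc q p), ?_, ?_⟩
      · rw [hC]; exact ⟨_, href _ hp, rfl⟩
      · rw [hP₀eq, hR'app, ← sub_eq_add_neg, ref_scoord, refc_refc]


/-- Both the vertices-and-edge-midpoints configuration and the
vertices-edge-midpoints-and-face-centers configuration of a regular hexagon tiling with
side 2 are balanced configurations. -/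
theorem hexagon_with_midpoints_balanced (P u v : E2)
    (hu : ‖u‖ = 2 * Real.sqrt 3) (hv : ‖v‖ = 2 * Real.sqrt 3) (huv : ⟪u, v⟫ = 6) :
    IsBalanced (hexVertsAndMids P u v) ∧ IsBalanced (hexVertsMidsCenters P u v) := by
  obtain ⟨R, hRu, hRv, hnorm, hfix, hR3⟩ := exists_rot hu hv huv
  have h12 : ((2 : ℝ) * Real.sqrt 3) ^ 2 = 12 := by
    rw [mul_pow, Real.sq_sqrt] <;> norm_num
  have huu : ⟪u, u⟫ = 12 := by rw [real_inner_self_eq_norm_sq, hu, h12]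
  have hvv : ⟪v, v⟫ = 12 := by rw [real_inner_self_eq_norm_sq, hv, h12]
  have hnsq := nsq_aux huu hvv huv
  constructor
  · exact balanced_of_cond P u v hnsq R hRu hRv hnorm hfix hR3 cond1 cond1_sym _
      (hexVertsAndMids_eq P u v)
  · exact balanced_of_cond P u v hnsq R hRu hRv hnorm hfix hR3 cond2 cond2_sym _
      (hexVertsMidsCenters_eq P u v)
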